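/- Let h : P → Q be a homomorphism of finitely generated, integral, saturated, sharp monoids, and let φ : σ_Q → σ_P be the dual map of real cones, where σ_P = Hom(P, ℝ≥0). Then h is exact if and only if φ is surjective. -/

import Mathlib

set_option linter.unusedSectionVars false
set_option maxHeartbeats 1000000

open Finset

section Farkas
variable {K : Type*} [Field K] [LinearOrder K] [IsStrictOrderedRing K] {V : Type*} [AddCommGroup V] [Module K V]

lemma farkas_aux : ∀ (m : ℕ) (s : Fin m → V) (v : V),
    (∃ c : Fin m → K, (∀ i, 0 ≤ c i) ∧ v = ∑ i, c i • s i) ∨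
    (∃ f : V →ₗ[K] K, (∀ i, 0 ≤ f (s i)) ∧ f v < 0) := by
  intro m
  induction m with
  | zero =>
    intro s v
    by_cases hv : v = 0
    · exact Or.inl ⟨0, fun i => le_refl _, by simp [hv]⟩
    · have h1 : ¬ ∀ φ : Module.Dual K V, φ v = 0 := by
        simpa [Module.forall_dual_apply_eq_zero_iff] using hv
      push_neg at h1
      obtain ⟨φ, hφ⟩ := h1
      rcases lt_or_gt_of_ne hφ with h | h
      · exact Or.inr ⟨φ, fun i => i.elim0, h⟩
      · exact Or.inr ⟨-φ, fun i => i.elim0, by simpa using neg_neg_iff_pos.2 h⟩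
  | succ m ih =>
    intro s v
    set T : Fin m → V := fun i => s i.succ with hT
    rcases ih T v with ⟨c, hc, hv⟩ | ⟨f, hf, hfv⟩
    · -- v in cone of the tail
      refine Or.inl ⟨Fin.cases 0 c, ?_, ?_⟩
      · intro i
        refine Fin.cases ?_ ?_ i
        · exact le_refl _
        · intro j; exact hc j
      · rw [Fin.sum_univ_succ]
        simpa using hv
    · by_cases hs0 : 0 ≤ f (s 0)
      · refine Or.inr ⟨f, ?_, hfv⟩
        intro i
        refine Fin.cases hs0 (fun j => hf j) i
      · push_neg at hs0
        -- project along s 0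
        set π : V →ₗ[K] V := LinearMap.id - ((f (s 0))⁻¹ • f).smulRight (s 0) with hπ
        have hπ_apply : ∀ x, π x = x - ((f (s 0))⁻¹ * f x) • s 0 := by
          intro x; simp [hπ, LinearMap.sub_apply, LinearMap.smulRight_apply, smul_smul]
        have hfs0 : f (s 0) ≠ 0 := ne_of_lt hs0
        rcases ih (fun i => π (T i)) (π v) with ⟨c, hc, hv⟩ | ⟨g, hg, hgv⟩
        · -- reconstruct coefficient of s 0
          set μ : K := (f (s 0))⁻¹ * (f v - ∑ i, c i * f (T i)) with hμ
          have hμ0 : 0 ≤ μ := by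
            have hnum : f v - ∑ i, c i * f (T i) < 0 := by
              have : 0 ≤ ∑ i, c i * f (T i) :=
                Finset.sum_nonneg fun i _ => mul_nonneg (hc i) (hf i)
              linarith
            have hinv : (f (s 0))⁻¹ < 0 := inv_lt_zero.mpr hs0
            have := mul_pos_of_neg_of_neg hinv hnum
            exact le_of_lt (by simpa [hμ] using this)
          refine Or.inl ⟨Fin.cases μ c, ?_, ?_⟩
          · intro i; refine Fin.cases hμ0 (fun j => hc j) i
          · rw [Fin.sum_univ_succ]
            simp only [Fin.cases_zero, Fin.cases_succ]
            set k : K := (f (s 0))⁻¹ with hk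
            have hsum : ∑ i, c i • π (T i)
                = (∑ i, c i • T i) - (∑ i, c i * (k * f (T i))) • s 0 := by
              simp only [hπ_apply, smul_sub, smul_smul, Finset.sum_sub_distrib, ← hk]
              rw [Finset.sum_smul]
            have hv' : v - (k * f v) • s 0
                = (∑ i, c i • T i) - (∑ i, c i * (k * f (T i))) • s 0 := by
              rw [← hsum, ← hv, hπ_apply, hk]
            have hμeq : μ = k * f v - ∑ i, c i * (k * f (T i)) := by
              rw [hμ, mul_sub, Finset.mul_sum]
              congr 1
              exact Finset.sum_congr rfl fun i _ => by ring
            have hveq : v = μ • s 0 + ∑ i, c i • T i := by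
              rw [hμeq, sub_smul]
              linear_combination (norm := abel) hv'
            rw [hveq]
        · -- compose
          refine Or.inr ⟨g.comp π, ?_, by simpa using hgv⟩
          intro i
          refine Fin.cases ?_ (fun j => by simpa using hg j) i
          have : π (s 0) = 0 := by
            rw [hπ_apply]; rw [inv_mul_cancel₀ hfs0]; simp
          simp [this]
end Farkas


section Cone
variable {ρ : Type*} [Fintype ρ]

/-- Coordinatewise cast of a rational vector to a real vector. -/
def castFun (w : ρ → ℚ) : ρ → ℝ := fun r => (w r : ℝ)

lemma castFun_inj : Function.Injective (castFun (ρ := ρ)) := by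
  intro a b hab
  funext r
  have h2 : (a r : ℝ) = (b r : ℝ) := congrFun hab r
  exact_mod_cast h2

/-- Real pairing of a rational vector with a real vector. -/
def dotR (d : ρ → ℚ) (x : ρ → ℝ) : ℝ := ∑ r, (d r : ℝ) * x r

/-- Rational pairing. -/
def dotQ (d w : ρ → ℚ) : ℚ := ∑ r, d r * w r

lemma dotR_castFun (d w : ρ → ℚ) : dotR d (castFun w) = ((dotQ d w : ℚ) : ℝ) := by
  simp [dotR, dotQ, castFun]

lemma dotR_neg (d : ρ → ℚ) (x : ρ → ℝ) : dotR (-d) x = -dotR d x := by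
  simp [dotR, ← Finset.sum_neg_distrib]

lemma dotR_sum {κ : Type*} [Fintype κ] (d : ρ → ℚ) (c : κ → ℝ) (y : κ → ρ → ℝ) :
    dotR d (∑ k, c k • y k) = ∑ k, c k * dotR d (y k) := by
  unfold dotR
  simp only [Finset.sum_apply, Pi.smul_apply, smul_eq_mul, Finset.mul_sum]
  rw [Finset.sum_comm]
  refine Finset.sum_congr rfl fun k _ => Finset.sum_congr rfl fun r _ => by ring

lemma castFun_comb (qa qb : ℚ) (a b : ρ → ℚ) :
    castFun (qa • a - qb • b) = (qa : ℝ) • castFun a - (qb : ℝ) • castFun b := by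
  funext r
  simp only [castFun, Pi.sub_apply, Pi.smul_apply, smul_eq_mul]
  push_cast
  ring

variable {ι : Type*} [Fintype ι]

/-- Membership in the real cone generated by (casts of) rational vectors. -/
def InCone (S : ι → ρ → ℚ) (x : ρ → ℝ) : Prop :=
  ∃ c : ι → ℝ, (∀ i, 0 ≤ c i) ∧ x = ∑ i, c i • castFun (S i)

lemma incone_gen [DecidableEq ι] (S : ι → ρ → ℚ) (i : ι) : InCone S (castFun (S i)) := by
  refine ⟨fun j => if j = i then 1 else 0, fun j => by positivity, ?_⟩
  simp [ite_smul]

lemma incone_add {S : ι → ρ → ℚ} {x y : ρ → ℝ} (hx : InCone S x) (hy : InCone S y) :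
    InCone S (x + y) := by
  obtain ⟨c, hc, rfl⟩ := hx
  obtain ⟨c', hc', rfl⟩ := hy
  exact ⟨c + c', fun i => add_nonneg (hc i) (hc' i), by
    rw [← Finset.sum_add_distrib]
    refine Finset.sum_congr rfl fun i _ => ?_
    simp [add_smul]⟩

lemma incone_smul {S : ι → ρ → ℚ} {x : ρ → ℝ} {t : ℝ} (ht : 0 ≤ t) (hx : InCone S x) :
    InCone S (t • x) := by
  obtain ⟨c, hc, rfl⟩ := hx
  exact ⟨t • c, fun i => mul_nonneg ht (hc i), by
    rw [Finset.smul_sum]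
    refine Finset.sum_congr rfl fun i _ => ?_
    simp [smul_smul]⟩

lemma incone_combo {κ : Type*} [Fintype κ] {S : ι → ρ → ℚ} (c : κ → ℝ) (y : κ → ρ → ℝ)
    (hc : ∀ k, 0 ≤ c k) (hy : ∀ k, InCone S (y k)) : InCone S (∑ k, c k • y k) := by
  classical
  choose w hw hsum using hy
  refine ⟨fun i => ∑ k, c k * w k i, fun i => Finset.sum_nonneg fun k _ =>
    mul_nonneg (hc k) (hw k i), ?_⟩
  calc ∑ k, c k • y k = ∑ k, ∑ i, (c k * w k i) • castFun (S i) := by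
        refine Finset.sum_congr rfl fun k _ => ?_
        rw [hsum k, Finset.smul_sum]
        refine Finset.sum_congr rfl fun i _ => ?_
        rw [smul_smul]
    _ = ∑ i, (∑ k, c k * w k i) • castFun (S i) := by
        rw [Finset.sum_comm]
        refine Finset.sum_congr rfl fun i _ => ?_
        rw [Finset.sum_smul]

lemma incone_reindex {ι' : Type*} [Fintype ι'] (e : ι ≃ ι') (S : ι → ρ → ℚ) (x : ρ → ℝ)
    (h : InCone S x) : InCone (S ∘ e.symm) x := by
  obtain ⟨c, hc, rfl⟩ := h
  refine ⟨c ∘ e.symm, fun i => hc _, ?_⟩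
  rw [← Equiv.sum_comp e (fun i' => (c ∘ e.symm) i' • castFun ((S ∘ e.symm) i'))]
  simp

end Cone

section DD
variable {ρ : Type*} [Fintype ρ] {ι : Type*} [Fintype ι]

lemma castFun_zero : castFun (0 : ρ → ℚ) = 0 := by
  funext r; simp [castFun]

lemma incone_zero (S : ι → ρ → ℚ) : InCone S 0 :=
  ⟨0, fun i => le_refl _, by simp⟩

lemma dotR_add (d : ρ → ℚ) (x y : ρ → ℝ) : dotR d (x + y) = dotR d x + dotR d y := by
  simp [dotR, ← Finset.sum_add_distrib, mul_add]

lemma dotR_smulR (d : ρ → ℚ) (t : ℝ) (x : ρ → ℝ) : dotR d (t • x) = t * dotR d x := by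
  simp [dotR, Finset.mul_sum]
  exact Finset.sum_congr rfl fun r _ => by ring

lemma dotQ_comb (d : ρ → ℚ) (qa qb : ℚ) (a b : ρ → ℚ) :
    dotQ d (qa • a - qb • b) = qa * dotQ d a - qb * dotQ d b := by
  unfold dotQ
  rw [Finset.mul_sum, Finset.mul_sum, ← Finset.sum_sub_distrib]
  exact Finset.sum_congr rfl fun r _ => by simp [Pi.sub_apply]; ring

lemma dd_step [DecidableEq ι] (S : ι → ρ → ℚ) (d : ρ → ℚ) :
    ∃ S' : (ι ⊕ ι × ι) → ρ → ℚ, ∀ x, InCone S' x ↔ (InCone S x ∧ 0 ≤ dotR d x) := by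
  classical
  set S' : (ι ⊕ ι × ι) → ρ → ℚ := Sum.elim
    (fun i => if 0 ≤ dotQ d (S i) then S i else 0)
    (fun p => if 0 < dotQ d (S p.1) ∧ dotQ d (S p.2) < 0
      then dotQ d (S p.1) • S p.2 - dotQ d (S p.2) • S p.1 else 0) with hS'
  have hgen : ∀ t, InCone S (castFun (S' t)) ∧ 0 ≤ dotR d (castFun (S' t)) := by
    rintro (i | ⟨a, b⟩)
    · by_cases hdi : 0 ≤ dotQ d (S i)
      · have hSi : S' (Sum.inl i) = S i := by simp [hS', if_pos hdi]
        rw [hSi]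
        exact ⟨incone_gen S i, by rw [dotR_castFun]; exact_mod_cast hdi⟩
      · have hSi : S' (Sum.inl i) = 0 := by simp [hS', if_neg hdi]
        rw [hSi, castFun_zero]
        exact ⟨incone_zero S, by simp [dotR]⟩
    · by_cases hab : 0 < dotQ d (S a) ∧ dotQ d (S b) < 0
      · have hu : S' (Sum.inr (a, b)) = dotQ d (S a) • S b - dotQ d (S b) • S a := by
          simp [hS', if_pos hab]
        rw [hu]
        constructor
        · rw [castFun_comb, sub_eq_add_neg, ← neg_smul]
          exact incone_add
            (incone_smul (by exact_mod_cast hab.1.le) (incone_gen S b))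
            (incone_smul (by
              have hcast : ((dotQ d (S b) : ℚ) : ℝ) < 0 := by exact_mod_cast hab.2
              linarith) (incone_gen S a))
        · rw [dotR_castFun, dotQ_comb]
          have : dotQ d (S a) * dotQ d (S b) - dotQ d (S b) * dotQ d (S a) = 0 := by ring
          rw [this]; simp
      · have hu : S' (Sum.inr (a, b)) = 0 := by simp [hS', if_neg hab]
        rw [hu, castFun_zero]
        exact ⟨incone_zero S, by simp [dotR]⟩
  refine ⟨S', fun x => ⟨?_, ?_⟩⟩
  · rintro ⟨c, hc, rfl⟩
    constructor
    · exact incone_combo c _ hc fun t => (hgen t).1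
    · rw [dotR_sum]
      exact Finset.sum_nonneg fun t _ => mul_nonneg (hc t) (hgen t).2
  · rintro ⟨⟨c, hc, rfl⟩, hd⟩
    suffices H : ∀ (n : ℕ) (c : ι → ℝ), (Finset.univ.filter fun i => c i ≠ 0).card ≤ n →
        (∀ i, 0 ≤ c i) → 0 ≤ dotR d (∑ i, c i • castFun (S i)) →
        InCone S' (∑ i, c i • castFun (S i)) by
      exact H _ c le_rfl hc hd
    clear hc hd c
    intro n
    induction n with
    | zero =>
      intro c hcard hc _
      have hall : ∀ i, c i = 0 := by
        intro i
        by_contra hi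
        have : i ∈ Finset.univ.filter fun i => c i ≠ 0 := by simp [hi]
        have := Finset.card_pos.mpr ⟨i, this⟩
        omega
      have : ∑ i, c i • castFun (S i) = 0 := by
        refine Finset.sum_eq_zero fun i _ => by rw [hall i, zero_smul]
      rw [this]
      exact incone_zero S'
    | succ n IH =>
      intro c hcard hc hdx
      by_cases hbneg : ∃ b, c b ≠ 0 ∧ dotQ d (S b) < 0
      · obtain ⟨b, hcb, hdb⟩ := hbneg
        have hcbpos : 0 < c b := lt_of_le_of_ne (hc b) (Ne.symm hcb)
        have hterm : dotR d (∑ i, c i • castFun (S i))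
            = ∑ i, c i * ((dotQ d (S i) : ℚ) : ℝ) := by
          rw [dotR_sum]
          exact Finset.sum_congr rfl fun i _ => by rw [dotR_castFun]
        have ha : ∃ a, 0 < c a * ((dotQ d (S a) : ℚ) : ℝ) := by
          by_contra hno
          push_neg at hno
          have hb' : c b * ((dotQ d (S b) : ℚ) : ℝ) < 0 :=
            mul_neg_of_pos_of_neg hcbpos (by exact_mod_cast hdb)
          have h3 : ∑ i ∈ Finset.univ.erase b, c i * ((dotQ d (S i) : ℚ) : ℝ) ≤ 0 :=
            Finset.sum_nonpos fun i _ => hno i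
          have h4 : ∑ i, c i * ((dotQ d (S i) : ℚ) : ℝ) < 0 := by
            rw [← Finset.sum_erase_add _ _ (Finset.mem_univ b)]
            linarith
          rw [hterm] at hdx
          linarith
        obtain ⟨a, hpa⟩ := ha
        have hcapos : 0 < c a := by
          rcases (hc a).lt_or_eq with h | h
          · exact h
          · exfalso; rw [← h] at hpa; simp at hpa
        have hqa : (0:ℝ) < ((dotQ d (S a) : ℚ) : ℝ) := by
          by_contra hcon
          push_neg at hcon
          nlinarith
        have hqaQ : 0 < dotQ d (S a) := by exact_mod_cast hqa
        have hne : a ≠ b := by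
          intro hEq
          rw [hEq] at hqaQ
          linarith
        have hu : S' (Sum.inr (a, b)) = dotQ d (S a) • S b - dotQ d (S b) • S a := by
          rw [hS']
          simp only [Sum.elim_inr]
          rw [if_pos ⟨hqaQ, hdb⟩]
        set qaR : ℝ := ((dotQ d (S a) : ℚ) : ℝ) with hqaR
        set qbR : ℝ := ((dotQ d (S b) : ℚ) : ℝ) with hqbR
        have hqbRneg : qbR < 0 := by rw [hqbR]; exact_mod_cast hdb
        set t : ℝ := min (c b / qaR) (c a / (-qbR)) with htdef
        have ht0 : 0 < t :=
          lt_min (div_pos hcbpos hqa) (div_pos hcapos (by linarith))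
        set c' : ι → ℝ := fun i =>
          if i = a then c a - t * (-qbR) else if i = b then c b - t * qaR else c i with hc'def
        have hc'a : c' a = c a - t * (-qbR) := by simp [hc'def]
        have hc'b : c' b = c b - t * qaR := by simp [hc'def, hne.symm]
        have hc'other : ∀ i, i ≠ a → i ≠ b → c' i = c i := by
          intro i hia hib; simp [hc'def, hia, hib]
        have hc' : ∀ i, 0 ≤ c' i := by
          intro i
          by_cases hia : i = a
          · rw [hia, hc'a]
            have : t ≤ c a / (-qbR) := min_le_right _ _
            have h2 : t * (-qbR) ≤ c a := by
              rw [← le_div_iff₀ (by linarith : (0:ℝ) < -qbR)]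
              exact this
            linarith
          · by_cases hib : i = b
            · rw [hib, hc'b]
              have : t ≤ c b / qaR := min_le_left _ _
              have h2 : t * qaR ≤ c b := by
                rw [← le_div_iff₀ hqa]
                exact this
              linarith
            · rw [hc'other i hia hib]; exact hc i
        -- split the sum at a and b
        have hbmem : b ∈ Finset.univ.erase a := Finset.mem_erase.mpr ⟨hne.symm, Finset.mem_univ b⟩
        have hsplit : ∀ e : ι → ℝ, ∑ i, e i • castFun (S i)
            = e a • castFun (S a) + e b • castFun (S b)
              + ∑ i ∈ (Finset.univ.erase a).erase b, e i • castFun (S i) := by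
          intro e
          rw [← Finset.add_sum_erase _ _ (Finset.mem_univ a), ← Finset.add_sum_erase _ _ hbmem,
            add_assoc]
        have htail : ∑ i ∈ (Finset.univ.erase a).erase b, c' i • castFun (S i)
            = ∑ i ∈ (Finset.univ.erase a).erase b, c i • castFun (S i) := by
          refine Finset.sum_congr rfl fun i hi => ?_
          have hib : i ≠ b := (Finset.mem_erase.mp hi).1
          have hia : i ≠ a := (Finset.mem_erase.mp (Finset.mem_erase.mp hi).2).1
          rw [hc'other i hia hib]
        have hcastu : castFun (dotQ d (S a) • S b - dotQ d (S b) • S a)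
            = qaR • castFun (S b) - qbR • castFun (S a) := castFun_comb _ _ _ _
        have hxsplit : ∑ i, c i • castFun (S i)
            = (∑ i, c' i • castFun (S i)) + t • castFun (S' (Sum.inr (a, b))) := by
          rw [hsplit c, hsplit c', htail, hu, hcastu, hc'a, hc'b]
          module
        -- support decreases
        have hssub : (Finset.univ.filter fun i => c' i ≠ 0)
            ⊂ (Finset.univ.filter fun i => c i ≠ 0) := by
          constructor
          · intro i hi
            simp only [Finset.mem_filter, Finset.mem_univ, true_and] at hi ⊢
            by_cases hia : i = a
            · rw [hia]; exact ne_of_gt hcapos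
            · by_cases hib : i = b
              · rw [hib]; exact hcb
              · rw [hc'other i hia hib] at hi; exact hi
          · intro hsub
            rcases min_cases (c b / qaR) (c a / (-qbR)) with ⟨hmin, -⟩ | ⟨hmin, -⟩
            · have hzb : c' b = 0 := by
                rw [hc'b, htdef, hmin, div_mul_cancel₀ _ (ne_of_gt hqa)]
                ring
              have : b ∈ Finset.univ.filter fun i => c i ≠ 0 := by
                simp [hcb]
              have hb' := hsub this
              simp only [Finset.mem_filter, Finset.mem_univ, true_and] at hb'
              exact hb' hzb
            · have hza : c' a = 0 := by
                rw [hc'a, htdef, hmin, div_mul_cancel₀ _ (by linarith : -qbR ≠ 0)]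
                ring
              have : a ∈ Finset.univ.filter fun i => c i ≠ 0 := by
                simp [ne_of_gt hcapos]
              have ha' := hsub this
              simp only [Finset.mem_filter, Finset.mem_univ, true_and] at ha'
              exact ha' hza
        have hcard' : (Finset.univ.filter fun i => c' i ≠ 0).card ≤ n := by
          have := Finset.card_lt_card hssub
          omega
        have hdu : dotR d (castFun (S' (Sum.inr (a, b)))) = 0 := by
          rw [hu, dotR_castFun, dotQ_comb]
          have : dotQ d (S a) * dotQ d (S b) - dotQ d (S b) * dotQ d (S a) = 0 := by ring
          rw [this]
          simp
        have hdy : 0 ≤ dotR d (∑ i, c' i • castFun (S i)) := by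
          rw [hxsplit, dotR_add, dotR_smulR, hdu, mul_zero, add_zero] at hdx
          exact hdx
        have hy := IH c' hcard' hc' hdy
        rw [hxsplit]
        exact incone_add hy (incone_smul ht0.le (hu ▸ (hu ▸ incone_gen S' (Sum.inr (a, b)))))
      · push_neg at hbneg
        refine ⟨Sum.elim c 0, ?_, ?_⟩
        · rintro (i | p)
          · exact hc i
          · exact le_refl _
        · rw [Fintype.sum_sum_type]
          simp only [Sum.elim_inl, Sum.elim_inr, Pi.zero_apply, zero_smul,
            Finset.sum_const_zero, add_zero]
          refine Finset.sum_congr rfl fun i _ => ?_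
          by_cases hci : c i = 0
          · simp [hci]
          · have hdi := hbneg i hci
            have : S' (Sum.inl i) = S i := by simp [hS', if_pos hdi]
            rw [this]
end DD

section RAT
variable {ρ : Type*} [Fintype ρ] [DecidableEq ρ]

lemma castFun_single (r : ρ) : castFun (Pi.single r 1 : ρ → ℚ) = Pi.single r (1:ℝ) := by
  funext j
  by_cases hj : j = r
  · subst hj; simp [castFun]
  · simp [castFun, Pi.single_apply, hj]

lemma nonneg_iff_basis (x : ρ → ℝ) :
    (∀ r, 0 ≤ x r) ↔ InCone (fun r : ρ => (Pi.single r 1 : ρ → ℚ)) x := by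
  constructor
  · intro hx
    refine ⟨x, hx, ?_⟩
    funext j
    rw [Finset.sum_apply]
    simp only [castFun_single, Pi.smul_apply, smul_eq_mul, Pi.single_apply]
    rw [Finset.sum_congr rfl (fun r _ => by rw [mul_ite, mul_one, mul_zero])]
    simp
  · rintro ⟨c, hc, rfl⟩ r
    rw [Finset.sum_apply]
    refine Finset.sum_nonneg fun i _ => ?_
    simp only [castFun_single, Pi.smul_apply, smul_eq_mul, Pi.single_apply]
    by_cases hri : r = i
    · simp [hri, hc i]
    · simp [hri]

lemma dd_list (L : List (ρ → ℚ)) :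
    ∀ {ι : Type*} [Fintype ι] [DecidableEq ι] (S : ι → ρ → ℚ),
    ∃ (k : ℕ) (S' : Fin k → ρ → ℚ), ∀ x, InCone S' x ↔
      (InCone S x ∧ ∀ d ∈ L, 0 ≤ dotR d x) := by
  induction L with
  | nil =>
    intro ι _ _ S
    refine ⟨Fintype.card ι, S ∘ (Fintype.equivFin ι).symm, fun x => ?_⟩
    simp only [List.not_mem_nil, false_implies, implies_true, and_true]
    constructor
    · intro hx
      have h2 := incone_reindex (Fintype.equivFin ι).symm _ x hx
      have h3 : ((S ∘ (Fintype.equivFin ι).symm) ∘ ((Fintype.equivFin ι).symm).symm) = S := by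
        funext i
        simp
      rwa [h3] at h2
    · exact incone_reindex (Fintype.equivFin ι) S x
  | cons d L IH =>
    intro ι _ _ S
    obtain ⟨S'', hstep⟩ := dd_step S d
    obtain ⟨k, S', hiff⟩ := IH S''
    refine ⟨k, S', fun x => ?_⟩
    rw [hiff x, hstep x]
    simp only [List.mem_cons]
    constructor
    · rintro ⟨⟨hA, hB⟩, hC⟩
      refine ⟨hA, fun d' hd' => ?_⟩
      rcases hd' with rfl | hd'
      · exact hB
      · exact hC d' hd'
    · rintro ⟨hA, hcond⟩
      exact ⟨⟨hA, hcond d (Or.inl rfl)⟩, fun d' hd' => hcond d' (Or.inr hd')⟩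

/-- Every nonnegative real solution of a rational homogeneous linear system is a
nonnegative combination of rational nonnegative solutions. -/
lemma rat_cone_decomp (L : List (ρ → ℚ)) (z : ρ → ℝ)
    (hz0 : ∀ r, 0 ≤ z r) (hzL : ∀ d ∈ L, dotR d z = 0) :
    ∃ (k : ℕ) (w : Fin k → ρ → ℚ) (t : Fin k → ℝ),
      (∀ j, 0 ≤ t j) ∧ (∀ j r, 0 ≤ w j r) ∧ (∀ j, ∀ d ∈ L, dotQ d (w j) = 0) ∧
      (∀ r, z r = ∑ j, t j * ((w j r : ℚ) : ℝ)) := by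
  classical
  set L' : List (ρ → ℚ) := L ++ L.map (fun d => -d) with hL'
  obtain ⟨k, S', hiff⟩ := dd_list L' (fun r : ρ => (Pi.single r 1 : ρ → ℚ))
  have hzmem : InCone S' z := by
    rw [hiff]
    refine ⟨(nonneg_iff_basis z).mp hz0, fun d' hd' => ?_⟩
    rw [hL', List.mem_append] at hd'
    rcases hd' with hd' | hd'
    · rw [hzL d' hd']
    · obtain ⟨d, hd, rfl⟩ := List.mem_map.mp hd'
      rw [dotR_neg, hzL d hd]
      simp
  obtain ⟨c, hc, hsum⟩ := hzmem
  have hgenprop : ∀ j, InCone (fun r : ρ => (Pi.single r 1 : ρ → ℚ)) (castFun (S' j)) ∧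
      ∀ d' ∈ L', 0 ≤ dotR d' (castFun (S' j)) := fun j => (hiff _).mp (incone_gen S' j)
  refine ⟨k, S', c, hc, ?_, ?_, ?_⟩
  · intro j r
    have h1 := (nonneg_iff_basis (castFun (S' j))).mpr (hgenprop j).1 r
    rw [show castFun (S' j) r = ((S' j r : ℚ) : ℝ) from rfl] at h1
    exact_mod_cast h1
  · intro j d hd
    have h1 := (hgenprop j).2 d (by rw [hL', List.mem_append]; exact Or.inl hd)
    have h2 := (hgenprop j).2 (-d) (by
      rw [hL', List.mem_append]
      exact Or.inr (List.mem_map.mpr ⟨d, hd, rfl⟩))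
    rw [dotR_neg] at h2
    have h3 : dotR d (castFun (S' j)) = 0 := le_antisymm (by linarith) h1
    rw [dotR_castFun] at h3
    exact_mod_cast h3
  · intro r
    have := congrFun hsum r
    rw [Finset.sum_apply] at this
    simpa [castFun] using this
end RAT

section Plumbing

lemma farkas {K : Type*} [Field K] [LinearOrder K] [IsStrictOrderedRing K] {V : Type*} [AddCommGroup V] [Module K V]
    {ι : Type*} [Fintype ι] (s : ι → V) (v : V) :
    (∃ c : ι → K, (∀ i, 0 ≤ c i) ∧ v = ∑ i, c i • s i) ∨
    (∃ f : V →ₗ[K] K, (∀ i, 0 ≤ f (s i)) ∧ f v < 0) := by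
  set e := Fintype.equivFin ι with he
  rcases farkas_aux (K := K) (V := V) (Fintype.card ι) (s ∘ e.symm) v with ⟨c, hc, hv⟩ | ⟨f, hf, hfv⟩
  · left
    refine ⟨c ∘ e, fun i => hc _, ?_⟩
    rw [hv, ← Equiv.sum_comp e (fun j => c j • (s ∘ e.symm) j)]
    exact Finset.sum_congr rfl fun i _ => by
      simp only [Function.comp_apply, Equiv.symm_apply_apply]
  · right
    exact ⟨f, fun i => by simpa using hf (e i), hfv⟩

lemma castFun_add {ρ : Type*} (v w : ρ → ℚ) : castFun (v + w) = castFun v + castFun w := by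
  funext r; simp [castFun]

lemma clear_denoms {ι : Type*} [Fintype ι] (μ : ι → ℚ) (hμ : ∀ i, 0 ≤ μ i) :
    ∃ (N : ℕ) (a : ι → ℕ), 0 < N ∧ ∀ i, (a i : ℚ) = N * μ i := by
  classical
  set N : ℕ := ∏ i, (μ i).den with hN
  have hNpos : 0 < N := Finset.prod_pos fun i _ => (μ i).pos
  have key : ∀ i, ∃ a : ℕ, (a : ℚ) = N * μ i := by
    intro i
    obtain ⟨M, hM⟩ := Finset.dvd_prod_of_mem (fun j => (μ j).den) (Finset.mem_univ i)
    have h1 : (N : ℚ) * μ i = (((μ i).num * M : ℤ) : ℚ) := by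
      have hden : μ i * ((μ i).den : ℚ) = ((μ i).num : ℚ) := by exact_mod_cast Rat.mul_den_eq_num (μ i)
      rw [hN, hM]
      push_cast
      calc ((μ i).den : ℚ) * (M : ℚ) * μ i = (μ i * ((μ i).den : ℚ)) * M := by ring
        _ = ((μ i).num : ℚ) * M := by rw [hden]
    have h2 : (0 : ℚ) ≤ (((μ i).num * M : ℤ) : ℚ) := by
      rw [← h1]
      have : (0:ℚ) ≤ (N:ℚ) := by positivity
      exact mul_nonneg this (hμ i)
    have h3 : (0 : ℤ) ≤ (μ i).num * M := by exact_mod_cast h2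
    refine ⟨((μ i).num * M).toNat, ?_⟩
    rw [h1]
    exact_mod_cast congrArg (fun z : ℤ => (z : ℚ)) (Int.toNat_of_nonneg h3)
  choose a ha using key
  exact ⟨N, a, hNpos, ha⟩

end Plumbing

lemma coord_nat_sum {A : Type*} [AddCommMonoid A] {β : Type*} (e : A →+ (β → ℚ))
    {ι' : Type*} [Fintype ι'] (Aco : ι' → ℕ) (y : ι' → A) (l : β) :
    e (∑ s, Aco s • y s) l = ∑ s, (Aco s : ℚ) * e (y s) l := by
  rw [map_sum, Finset.sum_apply]
  exact Finset.sum_congr rfl fun s _ => by rw [map_nsmul]; simp [nsmul_eq_mul]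

/-- For a homomorphism `h : P → Q` of finitely generated,
integral, saturated, sharp monoids (modeled as submonoids of their
Grothendieck groups), `h` is exact if and only if the dual map of real cones
`φ : σ_Q → σ_P`, given by precomposition with `h`, is surjective.  A point of
`σ_P = Hom(P, ℝ≥0)` is modeled as `f : G →+ ℝ` with `f ≥ 0` on `P`. -/
theorem stmt_6 {G H : Type*} [AddCommGroup G] [AddCommGroup H]
    (P : AddSubmonoid G) (Q : AddSubmonoid H) (h : G →+ H)
    (hPQ : ∀ x ∈ P, h x ∈ Q)
    (hPfg : P.FG) (hQfg : Q.FG)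
    (hGgen : ∀ x : G, ∃ a ∈ P, ∃ b ∈ P, x = a - b)
    (hHgen : ∀ y : H, ∃ a ∈ Q, ∃ b ∈ Q, y = a - b)
    (hPsharp : ∀ u ∈ P, -u ∈ P → u = 0) (hQsharp : ∀ u ∈ Q, -u ∈ Q → u = 0)
    (hPsat : ∀ (n : ℕ) (x : G), 1 ≤ n → n • x ∈ P → x ∈ P)
    (hQsat : ∀ (n : ℕ) (y : H), 1 ≤ n → n • y ∈ Q → y ∈ Q) :
    (∀ x : G, h x ∈ Q → x ∈ P) ↔
      (∀ f : G →+ ℝ, (∀ a ∈ P, 0 ≤ f a) →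
        ∃ g : H →+ ℝ, (∀ b ∈ Q, 0 ≤ g b) ∧ g.comp h = f) := by
  classical
  obtain ⟨Sp, hSp⟩ := hPfg
  obtain ⟨Sq, hSq⟩ := hQfg
  -- finiteness of the ambient groups as ℤ-modules
  haveI hMFG : Module.Finite ℤ G := by
    rw [Module.Finite.iff_addGroup_fg]
    refine AddGroup.fg_iff.mpr ⟨Sp, ?_, Sp.finite_toSet⟩
    rw [eq_top_iff]
    intro x _
    obtain ⟨a, ha, b, hb, rfl⟩ := hGgen x
    have hfoo : P ≤ (AddSubgroup.closure (Sp : Set G)).toAddSubmonoid := by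
      rw [← hSp]
      exact AddSubmonoid.closure_le.mpr AddSubgroup.subset_closure
    exact sub_mem (hfoo ha) (hfoo hb)
  haveI hMFH : Module.Finite ℤ H := by
    rw [Module.Finite.iff_addGroup_fg]
    refine AddGroup.fg_iff.mpr ⟨Sq, ?_, Sq.finite_toSet⟩
    rw [eq_top_iff]
    intro y _
    obtain ⟨a, ha, b, hb, rfl⟩ := hHgen y
    have hfoo : Q ≤ (AddSubgroup.closure (Sq : Set H)).toAddSubmonoid := by
      rw [← hSq]
      exact AddSubmonoid.closure_le.mpr AddSubgroup.subset_closure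
    exact sub_mem (hfoo ha) (hfoo hb)
  -- torsion-freeness
  haveI hTFG : NoZeroSMulDivisors ℤ G := by
    refine ⟨fun {c x} hcx => ?_⟩
    by_cases hc : c = 0
    · exact Or.inl hc
    · right
      have habs : (c.natAbs : ℕ) • x = 0 := by
        rcases Int.natAbs_eq c with hcc | hcc
        · rw [← natCast_zsmul, ← hcc, hcx]
        · rw [← natCast_zsmul, ← neg_neg ((c.natAbs : ℤ) • x), ← neg_zsmul, ← hcc, hcx, neg_zero]
      have hn : 1 ≤ c.natAbs := by
        have := Int.natAbs_pos.mpr hc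
        omega
      have hx1 : x ∈ P := hPsat _ x hn (by rw [habs]; exact P.zero_mem)
      have hx2 : -x ∈ P := hPsat _ (-x) hn (by rw [smul_neg, habs, neg_zero]; exact P.zero_mem)
      exact hPsharp x hx1 hx2
  haveI hTFH : NoZeroSMulDivisors ℤ H := by
    refine ⟨fun {c y} hcy => ?_⟩
    by_cases hc : c = 0
    · exact Or.inl hc
    · right
      have habs : (c.natAbs : ℕ) • y = 0 := by
        rcases Int.natAbs_eq c with hcc | hcc
        · rw [← natCast_zsmul, ← hcc, hcy]
        · rw [← natCast_zsmul, ← neg_neg ((c.natAbs : ℤ) • y), ← neg_zsmul, ← hcc, hcy, neg_zero]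
      have hn : 1 ≤ c.natAbs := by
        have := Int.natAbs_pos.mpr hc
        omega
      have hy1 : y ∈ Q := hQsat _ y hn (by rw [habs]; exact Q.zero_mem)
      have hy2 : -y ∈ Q := hQsat _ (-y) hn (by rw [smul_neg, habs, neg_zero]; exact Q.zero_mem)
      exact hQsharp y hy1 hy2
  haveI : Module.Free ℤ G := Module.free_of_finite_type_torsion_free'
  haveI : Module.Free ℤ H := Module.free_of_finite_type_torsion_free'
  set bG := Module.Free.chooseBasis ℤ G with hbG
  set bH := Module.Free.chooseBasis ℤ H with hbH
  -- rational coordinate embeddings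
  set coordG : G →+ (Module.Free.ChooseBasisIndex ℤ G → ℚ) :=
    AddMonoidHom.mk' (fun x l => ((bG.repr x l : ℤ) : ℚ))
      (by intro x y; funext l; simp [map_add]) with hcoordG
  set coordH : H →+ (Module.Free.ChooseBasisIndex ℤ H → ℚ) :=
    AddMonoidHom.mk' (fun y l => ((bH.repr y l : ℤ) : ℚ))
      (by intro x y; funext l; simp [map_add]) with hcoordH
  have hinjG : Function.Injective coordG := by
    intro x y hxy
    have : bG.repr x = bG.repr y := by
      ext l
      have h1 : ((bG.repr x l : ℤ) : ℚ) = ((bG.repr y l : ℤ) : ℚ) := congrFun hxy l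
      exact_mod_cast h1
    exact bG.repr.injective this
  have hinjH : Function.Injective coordH := by
    intro x y hxy
    have : bH.repr x = bH.repr y := by
      ext l
      have h1 : ((bH.repr x l : ℤ) : ℚ) = ((bH.repr y l : ℤ) : ℚ) := congrFun hxy l
      exact_mod_cast h1
    exact bH.repr.injective this
  -- generators lie in the monoids
  have hPsub : ∀ s : ↥Sp, (s : G) ∈ P := fun s => by
    rw [← hSp]; exact AddSubmonoid.subset_closure s.2
  have hQsub : ∀ s : ↥Sq, (s : H) ∈ Q := fun s => by
    rw [← hSq]; exact AddSubmonoid.subset_closure s.2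
  -- nonnegativity on generators extends to the whole monoid
  have nonnegP : ∀ (F : G →+ ℝ), (∀ s : ↥Sp, 0 ≤ F s) → ∀ x ∈ P, 0 ≤ F x := by
    intro F hF x hx
    rw [← hSp] at hx
    exact AddSubmonoid.closure_induction (fun y hy => hF ⟨y, hy⟩) (by simp)
      (fun y z _ _ hy' hz' => by rw [map_add]; exact add_nonneg hy' hz') hx
  have nonnegQ : ∀ (F : H →+ ℝ), (∀ s : ↥Sq, 0 ≤ F s) → ∀ y ∈ Q, 0 ≤ F y := by
    intro F hF y hy
    rw [← hSq] at hy
    exact AddSubmonoid.closure_induction (fun z hz => hF ⟨z, hz⟩) (by simp)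
      (fun z w _ _ hz' hw' => by rw [map_add]; exact add_nonneg hz' hw') hy
  -- coordinates of natural combinations
  have hcoordG_sum : ∀ {κ : Type} [Fintype κ] (A : κ → ℕ) (y : κ → G) (l),
      coordG (∑ s, A s • y s) l = ∑ s, (A s : ℚ) * coordG (y s) l := by
    intro κ _ A y l
    rw [map_sum]
    rw [Finset.sum_apply]
    refine Finset.sum_congr rfl fun s _ => ?_
    rw [map_nsmul]
    simp [nsmul_eq_mul]
  have hcoordH_sum : ∀ {κ : Type} [Fintype κ] (A : κ → ℕ) (y : κ → H) (l),
      coordH (∑ s, A s • y s) l = ∑ s, (A s : ℚ) * coordH (y s) l := by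
    intro κ _ A y l
    rw [map_sum]
    rw [Finset.sum_apply]
    refine Finset.sum_congr rfl fun s _ => ?_
    rw [map_nsmul]
    simp [nsmul_eq_mul]
  constructor
  · -- exact → surjective
    intro hexact f hf
    set τ := (↥Sp ⊕ (↥Sp ⊕ ↥Sq)) with hτ
    set col : τ → H := Sum.elim (fun s : ↥Sp => h (s : G))
      (Sum.elim (fun s : ↥Sp => -(h (s : G))) (fun s : ↥Sq => (s : H))) with hcol
    set cvec : τ → ℝ := Sum.elim (fun s : ↥Sp => f (s : G))
      (Sum.elim (fun s : ↥Sp => -(f (s : G))) (fun _ : ↥Sq => 0)) with hcvec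
    set sgen : τ → ((Module.Free.ChooseBasisIndex ℤ H → ℝ) × ℝ) :=
      fun r => (castFun (coordH (col r)), cvec r) with hsgen
    rcases farkas (K := ℝ) sgen ((0, 1) : (Module.Free.ChooseBasisIndex ℤ H → ℝ) × ℝ)
      with ⟨c, hc, hv⟩ | ⟨F1, hge, hlt⟩
    · -- a positive certificate: contradicts exactness
      exfalso
      have hv1 : (0 : Module.Free.ChooseBasisIndex ℤ H → ℝ)
          = ∑ r, c r • castFun (coordH (col r)) := by
        have h1 := congrArg (LinearMap.fst ℝ (Module.Free.ChooseBasisIndex ℤ H → ℝ) ℝ) hv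
        rw [map_sum] at h1
        simpa [hsgen] using h1
      have hv2 : (1 : ℝ) = ∑ r, c r * cvec r := by
        have h1 := congrArg (LinearMap.snd ℝ (Module.Free.ChooseBasisIndex ℤ H → ℝ) ℝ) hv
        rw [map_sum] at h1
        simpa [hsgen, smul_eq_mul] using h1
      set L : List (τ → ℚ) :=
        (Finset.univ : Finset (Module.Free.ChooseBasisIndex ℤ H)).toList.map
          (fun l => fun r : τ => coordH (col r) l) with hL
      have hzL : ∀ d ∈ L, dotR d c = 0 := by
        intro d hd
        rw [hL] at hd
        obtain ⟨l, -, rfl⟩ := List.mem_map.mp hd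
        have h1 := congrFun hv1 l
        rw [Finset.sum_apply] at h1
        unfold dotR
        rw [Finset.sum_congr rfl (fun r (_ : r ∈ Finset.univ) =>
          mul_comm ((coordH (col r) l : ℚ) : ℝ) (c r))]
        have h2 : ∀ r : τ, (c r • castFun (coordH (col r))) l
            = c r * ((coordH (col r) l : ℚ) : ℝ) := by
          intro r
          simp [castFun]
        rw [Finset.sum_congr rfl (fun r _ => h2 r)] at h1
        rw [← h1]
        simp
      obtain ⟨k, w, t, ht, hw, hsol, hrep⟩ := rat_cone_decomp L c hc hzL
      have hswap : (1 : ℝ) = ∑ j, t j * (∑ r, ((w j r : ℚ) : ℝ) * cvec r) := by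
        rw [hv2, Finset.sum_congr rfl (fun r (_ : r ∈ Finset.univ) => by rw [hrep r])]
        rw [Finset.sum_congr rfl (fun r (_ : r ∈ Finset.univ) => Finset.sum_mul _ _ (cvec r))]
        rw [Finset.sum_comm]
        refine Finset.sum_congr rfl fun j _ => ?_
        rw [Finset.mul_sum]
        exact Finset.sum_congr rfl fun r _ => by ring
      have hjex : ∃ j, 0 < t j * (∑ r, ((w j r : ℚ) : ℝ) * cvec r) := by
        by_contra hno
        push_neg at hno
        have : ∑ j, t j * (∑ r, ((w j r : ℚ) : ℝ) * cvec r) ≤ 0 :=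
          Finset.sum_nonpos fun j _ => hno j
        rw [← hswap] at this
        linarith
      obtain ⟨j, hj⟩ := hjex
      have hinner : 0 < ∑ r, ((w j r : ℚ) : ℝ) * cvec r := by
        by_contra hcon
        push_neg at hcon
        nlinarith [ht j]
      obtain ⟨N, a, hN, ha⟩ := clear_denoms (w j) (hw j)
      -- the integer relation in H
      have hHrel : ∑ r, a r • col r = 0 := by
        apply hinjH
        rw [map_zero]
        funext l
        have hsl := hsol j _ (List.mem_map.mpr
          ⟨l, Finset.mem_toList.mpr (Finset.mem_univ l), rfl⟩)
        unfold dotQ at hsl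
        rw [coord_nat_sum coordH]
        have h2 : ∑ r, (a r : ℚ) * coordH (col r) l
            = (N : ℚ) * ∑ r, coordH (col r) l * w j r := by
          rw [Finset.mul_sum]
          refine Finset.sum_congr rfl fun r _ => ?_
          rw [ha r]
          ring
        rw [h2, hsl, mul_zero]
        simp
      set A : ↥Sp → ℕ := fun s => a (Sum.inl s) with hA
      set B : ↥Sp → ℕ := fun s => a (Sum.inr (Sum.inl s)) with hB
      set M : ↥Sq → ℕ := fun s => a (Sum.inr (Sum.inr s)) with hM
      have hexp : ∑ s : ↥Sp, A s • h (s : G) - ∑ s : ↥Sp, B s • h (s : G)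
          + ∑ s : ↥Sq, M s • (s : H) = 0 := by
        rw [← hHrel, Fintype.sum_sum_type, Fintype.sum_sum_type]
        simp only [hcol, Sum.elim_inl, Sum.elim_inr]
        rw [Finset.sum_congr rfl (fun s (_ : s ∈ Finset.univ) =>
          (smul_neg (B s) (h (s : G)) : B s • -h (s : G) = -(B s • h (s : G))))]
        rw [Finset.sum_neg_distrib]
        abel
      set x0 : G := ∑ s : ↥Sp, B s • (s : G) - ∑ s : ↥Sp, A s • (s : G) with hx0
      have hhx0 : h x0 = ∑ s : ↥Sq, M s • (s : H) := by
        rw [hx0, map_sub, map_sum, map_sum]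
        rw [Finset.sum_congr rfl (fun s (_ : s ∈ Finset.univ) => map_nsmul h (B s) (s : G)),
          Finset.sum_congr rfl (fun s (_ : s ∈ Finset.univ) => map_nsmul h (A s) (s : G))]
        linear_combination (norm := abel) -hexp
      have hx0Q : h x0 ∈ Q := by
        rw [hhx0]
        exact AddSubmonoid.sum_mem Q fun s _ => AddSubmonoid.nsmul_mem Q (hQsub s) _
      have hx0P : x0 ∈ P := hexact x0 hx0Q
      have hfx0 : 0 ≤ f x0 := hf x0 hx0P
      have hfval : f x0 = ∑ s : ↥Sp, (B s : ℝ) * f (s : G)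
          - ∑ s : ↥Sp, (A s : ℝ) * f (s : G) := by
        rw [hx0, map_sub, map_sum, map_sum]
        congr 1
        · exact Finset.sum_congr rfl fun s _ => by
            rw [map_nsmul]; simp [nsmul_eq_mul]
        · exact Finset.sum_congr rfl fun s _ => by
            rw [map_nsmul]; simp [nsmul_eq_mul]
      have hNinner : (N : ℝ) * (∑ r, ((w j r : ℚ) : ℝ) * cvec r)
          = ∑ s : ↥Sp, (A s : ℝ) * f (s : G) - ∑ s : ↥Sp, (B s : ℝ) * f (s : G) := by
        rw [Finset.mul_sum]
        rw [Finset.sum_congr rfl (fun r (_ : r ∈ Finset.univ) => by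
          have har : ((a r : ℚ) : ℝ) = (N : ℝ) * ((w j r : ℚ) : ℝ) := by
            rw [ha r]; push_cast; ring
          calc (N : ℝ) * (((w j r : ℚ) : ℝ) * cvec r)
              = ((a r : ℚ) : ℝ) * cvec r := by rw [har]; ring
            _ = (a r : ℝ) * cvec r := by norm_cast)]
        rw [Fintype.sum_sum_type, Fintype.sum_sum_type]
        simp only [hcvec, Sum.elim_inl, Sum.elim_inr, hA, hB, hM, mul_zero,
          Finset.sum_const_zero, add_zero]
        rw [Finset.sum_congr rfl (fun s (_ : s ∈ Finset.univ) =>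
          (by ring : ((a (Sum.inr (Sum.inl s)) : ℕ) : ℝ) * -f (s : G)
            = -(((a (Sum.inr (Sum.inl s)) : ℕ) : ℝ) * f (s : G))))]
        rw [Finset.sum_neg_distrib]
        ring
      have hNpos : (0 : ℝ) < N := by exact_mod_cast hN
      rw [hfval] at hfx0
      nlinarith
    · -- the separating functional gives the desired extension
      set c1 : ℝ := F1 ((0, 1) : (Module.Free.ChooseBasisIndex ℤ H → ℝ) × ℝ) with hc1
      have hc1neg : c1 < 0 := hlt
      set cpos : ℝ := -c1 with hcpos
      have hcpos0 : 0 < cpos := by rw [hcpos]; linarith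
      set ℓ : (Module.Free.ChooseBasisIndex ℤ H → ℝ) → ℝ := fun v => F1 (v, 0) with hℓ
      have hF1split : ∀ (v : Module.Free.ChooseBasisIndex ℤ H → ℝ) (r : ℝ),
          F1 (v, r) = ℓ v + r * c1 := by
        intro v r
        have h1 : ((v, r) : (Module.Free.ChooseBasisIndex ℤ H → ℝ) × ℝ)
            = (v, 0) + r • ((0, 1) : (Module.Free.ChooseBasisIndex ℤ H → ℝ) × ℝ) := by
          rw [Prod.smul_mk]
          rw [Prod.mk_add_mk]
          simp
        rw [h1, map_add, map_smul, smul_eq_mul, hℓ, hc1]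
      have hℓadd : ∀ v w, ℓ (v + w) = ℓ v + ℓ w := by
        intro v w
        rw [hℓ]
        show F1 (v + w, 0) = F1 (v, 0) + F1 (w, 0)
        rw [show ((v + w, (0:ℝ)) : (Module.Free.ChooseBasisIndex ℤ H → ℝ) × ℝ)
          = (v, 0) + (w, 0) by rw [Prod.mk_add_mk]; simp, map_add]
      set g : H →+ ℝ := AddMonoidHom.mk' (fun y => cpos⁻¹ * ℓ (castFun (coordH y)))
        (by
          intro u v
          show cpos⁻¹ * ℓ (castFun (coordH (u + v)))
            = cpos⁻¹ * ℓ (castFun (coordH u)) + cpos⁻¹ * ℓ (castFun (coordH v))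
          rw [map_add, castFun_add, hℓadd]
          ring) with hg
      have hkey : ∀ s : ↥Sp, ℓ (castFun (coordH (h (s : G)))) = cpos * f (s : G) := by
        intro s
        have h1 := hge (Sum.inl s)
        have h2 := hge (Sum.inr (Sum.inl s))
        rw [hsgen] at h1 h2
        simp only [hcol, hcvec, Sum.elim_inl, Sum.elim_inr] at h1 h2
        rw [hF1split] at h1
        have hneg : castFun (coordH (-(h (s : G)))) = -(castFun (coordH (h (s : G)))) := by
          rw [map_neg]
          funext l
          simp [castFun]
        rw [hneg] at h2
        have hℓneg : ∀ v, ℓ (-v) = -ℓ v := by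
          intro v
          rw [hℓ]
          show F1 (-v, 0) = -F1 (v, 0)
          rw [show ((-v, (0:ℝ)) : (Module.Free.ChooseBasisIndex ℤ H → ℝ) × ℝ)
            = -(v, 0) by rw [Prod.neg_mk]; simp, map_neg]
        rw [hF1split, hℓneg] at h2
        rw [hcpos]
        linarith
      have hgq : ∀ s : ↥Sq, 0 ≤ g (s : H) := by
        intro s
        have h1 := hge (Sum.inr (Sum.inr s))
        rw [hsgen] at h1
        simp only [hcol, hcvec, Sum.elim_inl, Sum.elim_inr] at h1
        rw [hF1split, zero_mul, add_zero] at h1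
        have : g (s : H) = cpos⁻¹ * ℓ (castFun (coordH (s : H))) := rfl
        rw [this]
        positivity
      have hgP : ∀ s : ↥Sp, g (h (s : G)) = f (s : G) := by
        intro s
        have : g (h (s : G)) = cpos⁻¹ * ℓ (castFun (coordH (h (s : G)))) := rfl
        rw [this, hkey s]
        field_simp
      refine ⟨g, nonnegQ g hgq, ?_⟩
      have hagree : ∀ u ∈ P, g (h u) = f u := by
        intro u hu
        rw [← hSp] at hu
        exact AddSubmonoid.closure_induction (fun y hy => hgP ⟨y, hy⟩) (by simp)
          (fun y z _ _ hy' hz' => by rw [map_add, map_add, map_add, hy', hz']) hu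
      ext u
      obtain ⟨p1, hp1, p2, hp2, rfl⟩ := hGgen u
      rw [AddMonoidHom.comp_apply, map_sub, map_sub, map_sub,
        hagree p1 hp1, hagree p2 hp2]
  · -- surjective → exact
    intro hsurj x hhx
    rcases farkas (K := ℝ) (fun s : ↥Sp => castFun (coordG (s : G)))
      (castFun (coordG x)) with ⟨c, hc, hcone⟩ | ⟨F0, hF0, hF0x⟩
    · -- the coordinate vector of x is a real combination of generators: use rationality
      set z : Unit ⊕ ↥Sp → ℝ := Sum.elim (fun _ => 1) c with hz
      have hz0 : ∀ o, 0 ≤ z o := by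
        rintro (u | s)
        · exact zero_le_one
        · exact hc s
      set L : List (Unit ⊕ ↥Sp → ℚ) :=
        (Finset.univ : Finset (Module.Free.ChooseBasisIndex ℤ G)).toList.map
          (fun l => Sum.elim (fun _ : Unit => -(coordG x l)) (fun s : ↥Sp => coordG (s : G) l))
        with hL
      have hxl : ∀ l, ((coordG x l : ℚ) : ℝ)
          = ∑ s : ↥Sp, c s * ((coordG (s : G) l : ℚ) : ℝ) := by
        intro l
        have h1 := congrFun hcone l
        rw [Finset.sum_apply] at h1
        simpa [castFun] using h1
      have hzL : ∀ d ∈ L, dotR d z = 0 := by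
        intro d hd
        rw [hL] at hd
        obtain ⟨l, -, rfl⟩ := List.mem_map.mp hd
        unfold dotR
        rw [Fintype.sum_sum_type]
        simp only [Sum.elim_inl, Sum.elim_inr, hz]
        have hcomm : ∑ s : ↥Sp, ((coordG (↑s : G) l : ℚ) : ℝ) * c s
            = ∑ s : ↥Sp, c s * ((coordG (↑s : G) l : ℚ) : ℝ) :=
          Finset.sum_congr rfl fun s _ => mul_comm _ _
        rw [hcomm, ← hxl]
        rw [Fintype.sum_unique]
        push_cast
        ring
      obtain ⟨k, w, t, ht, hw, hsol, hrep⟩ := rat_cone_decomp L z hz0 hzL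
      have hone : (1 : ℝ) = ∑ j, t j * ((w j (Sum.inl ()) : ℚ) : ℝ) := by
        have := hrep (Sum.inl ())
        simpa [hz] using this
      have hjex : ∃ j, w j (Sum.inl ()) ≠ 0 := by
        by_contra hno
        push_neg at hno
        have hzero : ∑ j, t j * ((w j (Sum.inl ()) : ℚ) : ℝ) = 0 :=
          Finset.sum_eq_zero fun j _ => by rw [hno j]; simp
        rw [hzero] at hone
        exact one_ne_zero hone
      obtain ⟨j, hj⟩ := hjex
      have hwj0 : 0 < w j (Sum.inl ()) := lt_of_le_of_ne (hw j (Sum.inl ())) (Ne.symm hj)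
      obtain ⟨N, a, hN, ha⟩ := clear_denoms (w j) (hw j)
      have haeq : coordG (∑ s : ↥Sp, a (Sum.inr s) • (s : G)) = coordG (a (Sum.inl ()) • x) := by
        funext l
        have hsl := hsol j _ (List.mem_map.mpr
          ⟨l, Finset.mem_toList.mpr (Finset.mem_univ l), rfl⟩)
        unfold dotQ at hsl
        rw [Fintype.sum_sum_type] at hsl
        simp only [Sum.elim_inl, Sum.elim_inr] at hsl
        rw [Fintype.sum_unique] at hsl
        have hsl' : ∑ s : ↥Sp, coordG (↑s : G) l * w j (Sum.inr s)
            = coordG x l * w j (Sum.inl ()) := by linarith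
        have h2 : ∑ s : ↥Sp, coordG (↑s : G) l * (a (Sum.inr s) : ℚ)
            = (a (Sum.inl ()) : ℚ) * coordG x l := by
          calc ∑ s : ↥Sp, coordG (↑s : G) l * (a (Sum.inr s) : ℚ)
              = ∑ s : ↥Sp, (N : ℚ) * (coordG (↑s : G) l * w j (Sum.inr s)) := by
                refine Finset.sum_congr rfl fun s _ => ?_
                rw [ha (Sum.inr s)]
                ring
            _ = (N : ℚ) * ∑ s : ↥Sp, coordG (↑s : G) l * w j (Sum.inr s) := by
                rw [Finset.mul_sum]
            _ = (N : ℚ) * (coordG x l * w j (Sum.inl ())) := by rw [hsl']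
            _ = (a (Sum.inl ()) : ℚ) * coordG x l := by rw [ha (Sum.inl ())]; ring
        rw [coord_nat_sum coordG]
        have hax : coordG (a (Sum.inl ()) • x) l = (a (Sum.inl ()) : ℚ) * coordG x l := by
          rw [map_nsmul]
          simp [nsmul_eq_mul]
        rw [hax, ← h2]
        exact Finset.sum_congr rfl fun s _ => mul_comm _ _
      have hGeq : ∑ s : ↥Sp, a (Sum.inr s) • (s : G) = a (Sum.inl ()) • x := hinjG haeq
      have hmem : (a (Sum.inl ())) • x ∈ P := by
        rw [← hGeq]
        exact AddSubmonoid.sum_mem P fun s _ => AddSubmonoid.nsmul_mem P (hPsub s) _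
      have hpos : 1 ≤ a (Sum.inl ()) := by
        have hposQ : (0:ℚ) < (N:ℚ) * w j (Sum.inl ()) :=
          mul_pos (by exact_mod_cast hN) hwj0
        have h1 : (0:ℚ) < (a (Sum.inl ()) : ℚ) := by rw [ha (Sum.inl ())]; exact hposQ
        have h2 : 0 < a (Sum.inl ()) := by exact_mod_cast h1
        omega
      exact hPsat _ x hpos hmem
    · -- a separating functional exists: contradiction with surjectivity
      set F : G →+ ℝ := AddMonoidHom.mk' (fun y => F0 (castFun (coordG y)))
        (by
          intro u v
          show F0 (castFun (coordG (u + v))) = F0 (castFun (coordG u)) + F0 (castFun (coordG v))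
          rw [map_add, castFun_add, map_add]) with hF
      have hFP : ∀ u ∈ P, 0 ≤ F u := nonnegP F (fun s => hF0 s)
      obtain ⟨g, hg, hgf⟩ := hsurj F hFP
      have h1 : 0 ≤ g (h x) := hg (h x) hhx
      have h2 : g (h x) = F x := by rw [← AddMonoidHom.comp_apply, hgf]
      rw [h2] at h1
      exact absurd hF0x (not_lt.mpr h1)
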